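/- Let A and B be real random variables on a probability space with B > 0 almost surely, satisfying E[exp(λA − λ²B²/2)] ≤ 1 for all λ ∈ ℝ, and assume 0 < E[B] < ∞. Then for every real p > 0, E[ ( |A| / √(B² + (E B)²) )^p ] ≤ 2^{p − 1/2} · p · Γ(p/2), where Γ is the Gamma function. -/

import Mathlib

open MeasureTheory Real Set
open scoped ENNReal

private lemma gauss_shift' (a v : ℝ) (hv : 0 < v) :
    Integrable (fun l : ℝ => Real.exp (l * a - l ^ 2 * v / 2)) ∧
    ∫ l : ℝ, Real.exp (l * a - l ^ 2 * v / 2) =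
      Real.sqrt (2 * π / v) * Real.exp (a ^ 2 / (2 * v)) := by
  have hv2 : 0 < v / 2 := by linarith
  have key : ∀ l : ℝ, Real.exp (l * a - l ^ 2 * v / 2) =
      Real.exp (a ^ 2 / (2 * v)) * Real.exp (-(v/2) * (l - a / v) ^ 2) := by
    intro l
    rw [← Real.exp_add]
    congr 1
    field_simp
    ring
  constructor
  · simp_rw [key]
    exact ((integrable_exp_neg_mul_sq hv2).comp_sub_right (a / v)).const_mul _
  · simp_rw [key]
    rw [MeasureTheory.integral_const_mul,
      integral_sub_right_eq_self (fun x => Real.exp (-(v/2) * x ^ 2)) (a/v),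
      integral_gaussian]
    rw [mul_comm]
    congr 2
    rw [div_div_eq_mul_div]; ring

private lemma gamma_int' (p : ℝ) (hp : 0 < p) :
    ∫ t in Ioi (0:ℝ), Real.exp (-(t ^ 2 / 4)) * t ^ (p - 1) =
      (2:ℝ) ^ (p - 1) * Real.Gamma (p / 2) := by
  have h2 : (0:ℝ) < 2 := two_pos
  have sub1 := integral_comp_rpow_Ioi_of_pos
      (g := fun y : ℝ => Real.exp (-(y / 4)) * y ^ (p / 2 - 1)) (p := 2) h2
  have lhs_eq : (∫ x in Ioi (0:ℝ), ((2:ℝ) * x ^ ((2:ℝ) - 1)) •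
        (Real.exp (-(x ^ (2:ℝ) / 4)) * (x ^ (2:ℝ)) ^ (p / 2 - 1))) =
      2 * ∫ t in Ioi (0:ℝ), Real.exp (-(t ^ 2 / 4)) * t ^ (p - 1) := by
    rw [← MeasureTheory.integral_const_mul]
    refine setIntegral_congr_fun measurableSet_Ioi (fun x hx => ?_)
    have hx0 : (0:ℝ) < x := hx
    have hx2 : x ^ (2:ℝ) = x ^ 2 := by
      rw [← Real.rpow_natCast x 2]; norm_num
    have hxp : (x ^ 2) ^ (p / 2 - 1) = x ^ (p - 2) := by
      rw [← Real.rpow_natCast x 2, ← Real.rpow_mul hx0.le]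
      congr 1; push_cast; ring
    rw [hx2, hxp]
    have : x ^ ((2:ℝ) - 1) = x := by norm_num
    rw [this]
    have hxx : x * x ^ (p - 2) = x ^ (p - 1) := by
      nth_rewrite 1 [← Real.rpow_one x]
      rw [← Real.rpow_add hx0]; congr 1; ring
    rw [smul_eq_mul, ← hxx]; ring
  have sub2 : (∫ y in Ioi (0:ℝ), Real.exp (-(y / 4)) * y ^ (p / 2 - 1)) =
      (2:ℝ) ^ p * Real.Gamma (p / 2) := by
    have := integral_comp_mul_left_Ioi
        (g := fun y : ℝ => Real.exp (-(y / 4)) * y ^ (p / 2 - 1)) 0 (by norm_num : (0:ℝ) < 4)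
    rw [mul_zero] at this
    have heq : (∫ x in Ioi (0:ℝ), Real.exp (-(4 * x / 4)) * (4 * x) ^ (p / 2 - 1)) =
        (4:ℝ) ^ (p / 2 - 1) * ∫ x in Ioi (0:ℝ), Real.exp (-x) * x ^ (p / 2 - 1) := by
      rw [← MeasureTheory.integral_const_mul]
      refine setIntegral_congr_fun measurableSet_Ioi (fun x hx => ?_)
      have hx0 : (0:ℝ) < x := hx
      rw [Real.mul_rpow (by norm_num) hx0.le]
      have : 4 * x / 4 = x := by ring
      rw [this]; ring
    rw [heq] at this
    rw [← Real.Gamma_eq_integral (by linarith : 0 < p / 2)] at this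
    have h4 : ((4:ℝ))⁻¹ • (∫ y in Ioi (0:ℝ), Real.exp (-(y / 4)) * y ^ (p / 2 - 1)) =
        (4:ℝ) ^ (p / 2 - 1) * Real.Gamma (p / 2) := this.symm
    have := congrArg (fun z => (4:ℝ) * z) h4
    simp only [smul_eq_mul, ← mul_assoc] at this
    rw [mul_inv_cancel₀ (by norm_num : (4:ℝ) ≠ 0), one_mul] at this
    rw [this]
    have h4e : (4:ℝ) = 2 ^ (2:ℝ) := by
      rw [show (2:ℝ) ^ (2:ℝ) = (2:ℝ) ^ ((2:ℕ):ℝ) by norm_num, Real.rpow_natCast]; norm_num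
    have hstep : (4:ℝ) ^ (p / 2 - 1) = 2 ^ (p - 2) := by
      rw [h4e, ← Real.rpow_mul h2.le]; congr 1; ring
    have : (4:ℝ) * 4 ^ (p / 2 - 1) = 2 ^ p := by
      rw [hstep, h4e, ← Real.rpow_add h2]; congr 1; ring
    rw [this]
  rw [lhs_eq, sub2] at sub1
  have : (2:ℝ) ^ p = 2 * 2 ^ (p - 1) := by
    nth_rewrite 2 [show (2:ℝ) = 2 ^ (1:ℝ) by norm_num]
    rw [← Real.rpow_add h2]; norm_num
  rw [this] at sub1
  linarith [sub1]

private lemma step1' {Ω : Type*} {mΩ : MeasurableSpace Ω} {μ : Measure Ω}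
    [IsProbabilityMeasure μ]
    (A B : Ω → ℝ) (hA : Measurable A) (hB : Measurable B)
    (h14 : ∀ lam : ℝ,
      ∫⁻ ω, ENNReal.ofReal (Real.exp (lam * A ω - lam ^ 2 * (B ω) ^ 2 / 2)) ∂μ ≤ 1)
    (c : ℝ) (hc : 0 < c) :
    ∫⁻ ω, ENNReal.ofReal (c / Real.sqrt (B ω ^ 2 + c ^ 2) *
        Real.exp (A ω ^ 2 / (2 * (B ω ^ 2 + c ^ 2)))) ∂μ ≤ 1 := by
  have hsqrt2pi : (0:ℝ) < Real.sqrt (2 * π) := Real.sqrt_pos.mpr (by positivity)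
  set g : ℝ → ℝ := fun l => c / Real.sqrt (2 * π) * Real.exp (-(c ^ 2 / 2) * l ^ 2) with hg
  have hgnn : ∀ l, 0 ≤ g l := fun l => by positivity
  set e : ℝ → Ω → ℝ := fun l ω => Real.exp (l * A ω - l ^ 2 * B ω ^ 2 / 2) with he
  set K : ℝ → Ω → ℝ≥0∞ := fun l ω => ENNReal.ofReal (g l) * ENNReal.ofReal (e l ω) with hK
  have hgm : Measurable g := by
    apply Measurable.const_mul
    exact (((measurable_id.pow_const 2).const_mul _).exp)
  have hem : Measurable (Function.uncurry e) := by
    apply Real.measurable_exp.comp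
    apply Measurable.sub
    · exact measurable_fst.mul (hA.comp measurable_snd)
    · exact (((measurable_fst.pow_const 2).mul
        ((hB.comp measurable_snd).pow_const 2)).div_const 2)
  have hKmeas : AEMeasurable (Function.uncurry K) ((volume : Measure ℝ).prod μ) := by
    apply Measurable.aemeasurable
    exact ((hgm.comp measurable_fst).ennreal_ofReal).mul hem.ennreal_ofReal
  have hgint : Integrable g :=
    (integrable_exp_neg_mul_sq (by positivity : (0:ℝ) < c ^ 2 / 2)).const_mul _
  have hgone : ∫ l, g l = 1 := by
    rw [hg]
    rw [MeasureTheory.integral_const_mul, integral_gaussian]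
    have h1 : π / (c ^ 2 / 2) = 2 * π / c ^ 2 := by field_simp
    rw [h1, Real.sqrt_div (by positivity : (0:ℝ) ≤ 2 * π), Real.sqrt_sq hc.le]
    field_simp
  have hginted : ∫⁻ l, ENNReal.ofReal (g l) = 1 := by
    rw [← ofReal_integral_eq_lintegral_ofReal hgint (Filter.Eventually.of_forall hgnn), hgone,
      ENNReal.ofReal_one]
  have hiter : ∫⁻ l, ∫⁻ ω, K l ω ∂μ ≤ 1 := by
    calc ∫⁻ l, ∫⁻ ω, K l ω ∂μ
        = ∫⁻ l, ENNReal.ofReal (g l) * ∫⁻ ω, ENNReal.ofReal (e l ω) ∂μ := by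
          refine lintegral_congr fun l => ?_
          exact lintegral_const_mul' _ _ ENNReal.ofReal_ne_top
      _ ≤ ∫⁻ l, ENNReal.ofReal (g l) * 1 :=
          lintegral_mono fun l => mul_le_mul_right (h14 l) _
      _ = 1 := by simpa using hginted
  have hpt : ∀ ω, (∫⁻ l, K l ω) = ENNReal.ofReal (c / Real.sqrt (B ω ^ 2 + c ^ 2) *
      Real.exp (A ω ^ 2 / (2 * (B ω ^ 2 + c ^ 2)))) := by
    intro ω
    set v := B ω ^ 2 + c ^ 2 with hv
    have hvpos : 0 < v := by positivity
    have hsv : (0:ℝ) < Real.sqrt v := Real.sqrt_pos.mpr hvpos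
    have hprod : ∀ l, K l ω =
        ENNReal.ofReal (c / Real.sqrt (2 * π) * Real.exp (l * A ω - l ^ 2 * v / 2)) := by
      intro l
      show ENNReal.ofReal (g l) * ENNReal.ofReal (e l ω) = _
      rw [← ENNReal.ofReal_mul (hgnn l)]
      congr 1
      simp only [hg, he]
      rw [mul_assoc, ← Real.exp_add]
      congr 1
      rw [hv]; ring
    rw [lintegral_congr hprod,
      ← ofReal_integral_eq_lintegral_ofReal (((gauss_shift' (A ω) v hvpos).1).const_mul _)
        (Filter.Eventually.of_forall fun l => by positivity),
      MeasureTheory.integral_const_mul, (gauss_shift' (A ω) v hvpos).2]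
    congr 1
    rw [Real.sqrt_div (by positivity : (0:ℝ) ≤ 2 * π)]
    field_simp
  calc ∫⁻ ω, ENNReal.ofReal (c / Real.sqrt (B ω ^ 2 + c ^ 2) *
        Real.exp (A ω ^ 2 / (2 * (B ω ^ 2 + c ^ 2)))) ∂μ
      = ∫⁻ ω, (∫⁻ l, K l ω) ∂μ := lintegral_congr fun ω => (hpt ω).symm
    _ = ∫⁻ l, ∫⁻ ω, K l ω ∂μ := (lintegral_lintegral_swap hKmeas).symm
    _ ≤ 1 := hiter

private lemma step2' {Ω : Type*} {mΩ : MeasurableSpace Ω} {μ : Measure Ω}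
    [IsProbabilityMeasure μ]
    (A B : Ω → ℝ) (hA : Measurable A) (hB : Measurable B) (c : ℝ) (hc : 0 < c)
    (h1 : ∫⁻ ω, ENNReal.ofReal (c / Real.sqrt (B ω ^ 2 + c ^ 2) *
        Real.exp (A ω ^ 2 / (2 * (B ω ^ 2 + c ^ 2)))) ∂μ ≤ 1)
    (h2 : ∫⁻ ω, ENNReal.ofReal (Real.sqrt (B ω ^ 2 + c ^ 2) / c) ∂μ ≤ 2) :
    ∫⁻ ω, ENNReal.ofReal (Real.exp (A ω ^ 2 / (4 * (B ω ^ 2 + c ^ 2)))) ∂μ ≤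
      ENNReal.ofReal (Real.sqrt 2) := by
  have goal2 : ∫⁻ ω, ENNReal.ofReal (Real.exp (A ω ^ 2 / (4 * (B ω ^ 2 + c ^ 2)))) ∂μ ≤
      (2 : ℝ≥0∞) ^ ((1:ℝ)/2) := by
    set f₁ : Ω → ℝ := fun ω => c / Real.sqrt (B ω ^ 2 + c ^ 2) *
        Real.exp (A ω ^ 2 / (2 * (B ω ^ 2 + c ^ 2))) with hf₁
    set g₁ : Ω → ℝ := fun ω => Real.sqrt (B ω ^ 2 + c ^ 2) / c with hg₁
    have hvpos : ∀ ω, (0:ℝ) < B ω ^ 2 + c ^ 2 := fun ω => by positivity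
    have hf₁m : Measurable f₁ :=
      ((measurable_const.div ((hB.pow_const 2).add_const _).sqrt).mul
        ((hA.pow_const 2).div (((hB.pow_const 2).add_const _).const_mul 2)).exp)
    have hg₁m : Measurable g₁ := ((hB.pow_const 2).add_const _).sqrt.div_const c
    set F : Ω → ℝ≥0∞ := fun ω => ENNReal.ofReal (f₁ ω) ^ ((1:ℝ)/2) with hF
    set G : Ω → ℝ≥0∞ := fun ω => ENNReal.ofReal (g₁ ω) ^ ((1:ℝ)/2) with hG
    have hFm : AEMeasurable F μ := (hf₁m.ennreal_ofReal.pow_const _).aemeasurable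
    have hGm : AEMeasurable G μ := (hg₁m.ennreal_ofReal.pow_const _).aemeasurable
    have hpq : Real.HolderConjugate 2 2 := Real.HolderConjugate.two_two
    have CS := ENNReal.lintegral_mul_le_Lp_mul_Lq μ hpq hFm hGm
    have hFG : ∀ ω, (F * G) ω =
        ENNReal.ofReal (Real.exp (A ω ^ 2 / (4 * (B ω ^ 2 + c ^ 2)))) := by
      intro ω
      have hsv : (0:ℝ) < Real.sqrt (B ω ^ 2 + c ^ 2) := Real.sqrt_pos.mpr (hvpos ω)
      show F ω * G ω = _
      rw [hF, hG]
      rw [← ENNReal.mul_rpow_of_nonneg _ _ (by norm_num : (0:ℝ) ≤ 1/2),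
        ← ENNReal.ofReal_mul (by positivity)]
      have : f₁ ω * g₁ ω = Real.exp (A ω ^ 2 / (2 * (B ω ^ 2 + c ^ 2))) := by
        rw [hf₁, hg₁]
        field_simp
      rw [this, ENNReal.ofReal_rpow_of_pos (Real.exp_pos _)]
      congr 1
      rw [← Real.exp_mul]
      congr 1
      rw [div_mul_div_comm, mul_one]
      congr 1
      ring
    have hFp : ∀ ω, F ω ^ (2:ℝ) = ENNReal.ofReal (f₁ ω) := by
      intro ω; rw [hF, ← ENNReal.rpow_mul]; norm_num
    have hGp : ∀ ω, G ω ^ (2:ℝ) = ENNReal.ofReal (g₁ ω) := by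
      intro ω; rw [hG, ← ENNReal.rpow_mul]; norm_num
    calc ∫⁻ ω, ENNReal.ofReal (Real.exp (A ω ^ 2 / (4 * (B ω ^ 2 + c ^ 2)))) ∂μ
        = ∫⁻ ω, (F * G) ω ∂μ := lintegral_congr fun ω => (hFG ω).symm
      _ ≤ (∫⁻ ω, F ω ^ (2:ℝ) ∂μ) ^ ((1:ℝ)/2) * (∫⁻ ω, G ω ^ (2:ℝ) ∂μ) ^ ((1:ℝ)/2) := CS
      _ = (∫⁻ ω, ENNReal.ofReal (f₁ ω) ∂μ) ^ ((1:ℝ)/2) *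
          (∫⁻ ω, ENNReal.ofReal (g₁ ω) ∂μ) ^ ((1:ℝ)/2) := by
          rw [lintegral_congr hFp, lintegral_congr hGp]
      _ ≤ (1:ℝ≥0∞) ^ ((1:ℝ)/2) * (2:ℝ≥0∞) ^ ((1:ℝ)/2) := by
          gcongr
      _ = (2 : ℝ≥0∞) ^ ((1:ℝ)/2) := by rw [ENNReal.one_rpow, one_mul]
  refine goal2.trans (le_of_eq ?_)
  rw [Real.sqrt_eq_rpow, ← ENNReal.ofReal_rpow_of_pos two_pos, ENNReal.ofReal_ofNat]

/-- Theorem 2.1, the moment bound (2.3). -/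
theorem stmt_2 {Ω : Type*} {mΩ : MeasurableSpace Ω} {μ : Measure Ω}
    [IsProbabilityMeasure μ]
    (A B : Ω → ℝ) (hA : Measurable A) (hB : Measurable B)
    (hBpos : ∀ᵐ ω ∂μ, 0 < B ω)
    (h14 : ∀ lam : ℝ,
      ∫⁻ ω, ENNReal.ofReal (Real.exp (lam * A ω - lam ^ 2 * (B ω) ^ 2 / 2)) ∂μ ≤ 1)
    (hBint : Integrable B μ) (hEB : 0 < ∫ ω, B ω ∂μ)
    (p : ℝ) (hp : 0 < p) :
    ∫⁻ ω, ENNReal.ofReal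
        ((|A ω| / Real.sqrt ((B ω) ^ 2 + (∫ ω', B ω' ∂μ) ^ 2)) ^ p) ∂μ ≤
      ENNReal.ofReal ((2 : ℝ) ^ (p - 1 / 2) * p * Real.Gamma (p / 2)) := by
  set c : ℝ := ∫ ω', B ω' ∂μ with hcdef
  have hc : 0 < c := hEB
  have hvpos : ∀ ω, (0:ℝ) < B ω ^ 2 + c ^ 2 := fun ω => by positivity
  -- bound for the weight function
  have h2 : ∫⁻ ω, ENNReal.ofReal (Real.sqrt (B ω ^ 2 + c ^ 2) / c) ∂μ ≤ 2 := by
    have hmono : ∀ᵐ ω ∂μ, ENNReal.ofReal (Real.sqrt (B ω ^ 2 + c ^ 2) / c) ≤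
        ENNReal.ofReal ((B ω + c) / c) := by
      filter_upwards [hBpos] with ω hω
      apply ENNReal.ofReal_le_ofReal
      have hnum : Real.sqrt (B ω ^ 2 + c ^ 2) ≤ B ω + c := by
        rw [show B ω + c = Real.sqrt ((B ω + c) ^ 2) by rw [Real.sqrt_sq (by linarith)]]
        apply Real.sqrt_le_sqrt
        nlinarith
      gcongr
    calc ∫⁻ ω, ENNReal.ofReal (Real.sqrt (B ω ^ 2 + c ^ 2) / c) ∂μ
        ≤ ∫⁻ ω, ENNReal.ofReal ((B ω + c) / c) ∂μ := lintegral_mono_ae hmono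
      _ = ENNReal.ofReal (∫ ω, (B ω + c) / c ∂μ) := by
          have hint2 : Integrable (fun ω => (B ω + c) / c) μ := by
            exact (hBint.add (integrable_const c)).div_const c
          rw [← ofReal_integral_eq_lintegral_ofReal hint2 ?_]
          filter_upwards [hBpos] with ω hω
          positivity
      _ = 2 := by
          rw [integral_div, integral_add hBint (integrable_const c), integral_const, probReal_univ]
          simp only [ENNReal.toReal_one, smul_eq_mul, one_mul]
          rw [← hcdef, show (c + c) / c = 2 by field_simp; ring]
          norm_num
  have h1 := step1' A B hA hB h14 c hc
  have hM := step2' A B hA hB c hc h1 h2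
  -- the self-normalized variable
  set Y : Ω → ℝ := fun ω => |A ω| / Real.sqrt (B ω ^ 2 + c ^ 2) with hY
  have hYm : Measurable Y := hA.abs.div ((hB.pow_const 2).add_const _).sqrt
  have hYnn : ∀ ω, 0 ≤ Y ω := fun ω => by positivity
  have hYsq : ∀ ω, Y ω ^ 2 = A ω ^ 2 / (B ω ^ 2 + c ^ 2) := by
    intro ω
    rw [hY]
    rw [div_pow, sq_abs, Real.sq_sqrt (hvpos ω).le]
  -- layer cake
  have hlc := lintegral_rpow_eq_lintegral_meas_lt_mul μ
    (Filter.Eventually.of_forall hYnn) hYm.aemeasurable hp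
  -- Markov bound on tails
  have hmarkov : ∀ t : ℝ, 0 < t → μ {a | t < Y a} ≤
      ENNReal.ofReal (Real.sqrt 2 * Real.exp (-(t ^ 2 / 4))) := by
    intro t ht
    set h : Ω → ℝ≥0∞ := fun ω => ENNReal.ofReal (Real.exp (A ω ^ 2 / (4 * (B ω ^ 2 + c ^ 2))))
      with hh
    have hhm : AEMeasurable h μ :=
      (((hA.pow_const 2).div
        (((hB.pow_const 2).add_const _).const_mul 4)).exp.ennreal_ofReal).aemeasurable
    set ε : ℝ≥0∞ := ENNReal.ofReal (Real.exp (t ^ 2 / 4)) with hε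
    have hεpos : 0 < ε := ENNReal.ofReal_pos.mpr (Real.exp_pos _)
    have hεtop : ε ≠ ⊤ := ENNReal.ofReal_ne_top
    have hincl : {a | t < Y a} ⊆ {a | ε ≤ h a} := by
      intro a ha
      simp only [Set.mem_setOf_eq] at ha ⊢
      rw [hε, hh]
      apply ENNReal.ofReal_le_ofReal
      apply Real.exp_le_exp.mpr
      have h1 : t ^ 2 ≤ Y a ^ 2 := by
        apply sq_le_sq' (by linarith [hYnn a]) ha.le
      have h2 : t ^ 2 / 4 ≤ Y a ^ 2 / 4 := by linarith
      refine h2.trans (le_of_eq ?_)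
      rw [hYsq a]
      rw [div_div]
      congr 1
      ring
    have hmain := mul_meas_ge_le_lintegral₀ hhm ε
    have hfin : μ {a | ε ≤ h a} ≤ ε⁻¹ * ENNReal.ofReal (Real.sqrt 2) := by
      have : μ {a | ε ≤ h a} = ε⁻¹ * (ε * μ {a | ε ≤ h a}) := by
        rw [← mul_assoc, ENNReal.inv_mul_cancel hεpos.ne' hεtop, one_mul]
      rw [this]
      exact mul_le_mul_right (hmain.trans hM) _
    refine (measure_mono hincl).trans (hfin.trans (le_of_eq ?_))
    rw [hε, ← ENNReal.ofReal_inv_of_pos (Real.exp_pos _), ← Real.exp_neg,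
      ← ENNReal.ofReal_mul (Real.exp_nonneg _)]
    rw [mul_comm]
  -- integrate the tail bound
  have htail : ∫⁻ t in Ioi (0:ℝ), μ {a | t < Y a} * ENNReal.ofReal (t ^ (p-1)) ≤
      ENNReal.ofReal (Real.sqrt 2 * ((2:ℝ) ^ (p - 1) * Real.Gamma (p / 2))) := by
    have hbound : ∫⁻ t in Ioi (0:ℝ), μ {a | t < Y a} * ENNReal.ofReal (t ^ (p-1)) ≤
        ∫⁻ t in Ioi (0:ℝ),
          ENNReal.ofReal (Real.sqrt 2 * (Real.exp (-(t ^ 2 / 4)) * t ^ (p-1))) := by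
      refine lintegral_mono_ae ?_
      filter_upwards [self_mem_ae_restrict (measurableSet_Ioi : MeasurableSet (Ioi (0:ℝ)))]
        with t ht
      have ht0 : (0:ℝ) < t := ht
      calc μ {a | t < Y a} * ENNReal.ofReal (t ^ (p-1))
          ≤ ENNReal.ofReal (Real.sqrt 2 * Real.exp (-(t ^ 2 / 4))) *
            ENNReal.ofReal (t ^ (p-1)) := mul_le_mul_left (hmarkov t ht0) _
        _ = ENNReal.ofReal (Real.sqrt 2 * (Real.exp (-(t ^ 2 / 4)) * t ^ (p-1))) := by
            rw [← ENNReal.ofReal_mul (by positivity), mul_assoc]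
    refine hbound.trans (le_of_eq ?_)
    have hint : IntegrableOn
        (fun t : ℝ => Real.sqrt 2 * (Real.exp (-(t ^ 2 / 4)) * t ^ (p-1))) (Ioi 0) := by
      have heqf : (fun t : ℝ => Real.sqrt 2 * (Real.exp (-(t ^ 2 / 4)) * t ^ (p-1))) =
          fun t : ℝ => Real.sqrt 2 * (t ^ (p-1) * Real.exp (-(1/4) * t ^ 2)) := by
        funext t
        rw [show -(t ^ 2 / 4) = -(1/4) * t ^ 2 by ring]
        ring
      rw [heqf]
      exact (integrableOn_rpow_mul_exp_neg_mul_sq (by norm_num : (0:ℝ) < 1/4)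
        (by linarith : (-1:ℝ) < p - 1)).const_mul _
    rw [← ofReal_integral_eq_lintegral_ofReal hint ?_]
    · congr 1
      rw [MeasureTheory.integral_const_mul, gamma_int' p hp]
    · filter_upwards [self_mem_ae_restrict (measurableSet_Ioi : MeasurableSet (Ioi (0:ℝ)))]
        with t ht
      have ht0 : (0:ℝ) < t := ht
      positivity
  -- assemble
  calc ∫⁻ ω, ENNReal.ofReal (Y ω ^ p) ∂μ
      = ENNReal.ofReal p *
        ∫⁻ t in Ioi (0:ℝ), μ {a | t < Y a} * ENNReal.ofReal (t ^ (p-1)) := hlc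
    _ ≤ ENNReal.ofReal p *
        ENNReal.ofReal (Real.sqrt 2 * ((2:ℝ) ^ (p - 1) * Real.Gamma (p / 2))) :=
        mul_le_mul_right htail _
    _ = ENNReal.ofReal ((2 : ℝ) ^ (p - 1 / 2) * p * Real.Gamma (p / 2)) := by
        rw [← ENNReal.ofReal_mul hp.le]
        congr 1
        have hsqrt : Real.sqrt 2 * (2:ℝ) ^ (p - 1) = (2:ℝ) ^ (p - 1/2) := by
          rw [Real.sqrt_eq_rpow, ← Real.rpow_add two_pos]
          congr 1
          ring
        calc p * (Real.sqrt 2 * ((2:ℝ) ^ (p - 1) * Real.Gamma (p / 2)))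
            = (Real.sqrt 2 * (2:ℝ) ^ (p - 1)) * p * Real.Gamma (p / 2) := by ring
          _ = (2 : ℝ) ^ (p - 1 / 2) * p * Real.Gamma (p / 2) := by rw [hsqrt]
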